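/- If ρ ∈ (u_res)_* is not trace class, then there do not exist ρ₁, ρ₂ ∈ (u_res)_* with iρ₁ ≥ 0, iρ₂ ≥ 0, and ρ = ρ₁ − ρ₂. Hence the predual (u_res)_* is not spanned by its positive cone. -/

import Mathlib

open ContinuousLinearMap

noncomputable section

/-- `T` is a Hilbert–Schmidt operator: `∑ᵢ ‖T eᵢ‖² < ∞` for some Hilbert basis `(eᵢ)`. -/
def IsHS {H : Type*} [NormedAddCommGroup H] [InnerProductSpace ℂ H]
    (T : H →L[ℂ] H) : Prop :=
  ∃ (ι : Type) (b : HilbertBasis ι ℂ H), Summable fun i => ‖T (b i)‖ ^ 2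

/-- `T` is trace class: `T` is a product of two Hilbert–Schmidt operators. -/
def IsTC {H : Type*} [NormedAddCommGroup H] [InnerProductSpace ℂ H]
    (T : H →L[ℂ] H) : Prop :=
  ∃ A B : H →L[ℂ] H, IsHS A ∧ IsHS B ∧ T = A * B

/-- The operator `d = i(p₊ - p₋)` associated to the orthogonal projection `P = p₊`
(so `p₋ = 1 - P`). -/
def dOp {H : Type*} [NormedAddCommGroup H] [InnerProductSpace ℂ H]
    (P : H →L[ℂ] H) : H →L[ℂ] H :=
  Complex.I • (P - (1 - P))


section Aux

open scoped InnerProductSpace ENNReal NNReal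


variable {H : Type*} [NormedAddCommGroup H] [InnerProductSpace ℂ H] [CompleteSpace H]

def nnHS {ι : Type*} (T : H →L[ℂ] H) (b : HilbertBasis ι ℂ H) : ℝ≥0∞ :=
  ∑' i, (‖T (b i)‖₊ ^ 2 : ℝ≥0∞)

lemma parseval_hasSum {ι : Type*} (b : HilbertBasis ι ℂ H) (x : H) :
    HasSum (fun i => (‖⟪b i, x⟫_ℂ‖₊ ^ 2 : ℝ≥0)) (‖x‖₊ ^ 2) := by
  have h0 : HasSum (fun i => ⟪x, b i⟫_ℂ * ⟪b i, x⟫_ℂ) ⟪x, x⟫_ℂ :=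
    b.hasSum_inner_mul_inner x x
  have h1 : HasSum (fun i => ((‖⟪b i, x⟫_ℂ‖ ^ 2 : ℝ) : ℂ)) ⟪x, x⟫_ℂ := by
    convert h0 using 2 with i
    rw [← inner_conj_symm x (b i), ← Complex.normSq_eq_conj_mul_self,
      Complex.normSq_eq_norm_sq]
  have h2 : HasSum (fun i => (‖⟪b i, x⟫_ℂ‖ ^ 2 : ℝ)) (‖x‖ ^ 2) := by
    have := h1.mapL Complex.reCLM
    simp only [Complex.reCLM_apply, Complex.ofReal_re] at this
    rw [← inner_self_eq_norm_sq (𝕜 := ℂ) x]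
    convert this using 2 with i <;> simp
  rw [← NNReal.hasSum_coe]
  convert h2 using 1
  · ext i; simp
  · simp

set_option linter.unusedSectionVars false

lemma parseval_enn {ι : Type*} (b : HilbertBasis ι ℂ H) (x : H) :
    (‖x‖₊ ^ 2 : ℝ≥0∞) = ∑' i, (‖⟪b i, x⟫_ℂ‖₊ ^ 2 : ℝ≥0∞) := by
  have h := parseval_hasSum b x
  have h2 := ENNReal.coe_tsum (f := fun i => ‖⟪b i, x⟫_ℂ‖₊ ^ 2) h.summable
  rw [h.tsum_eq] at h2
  simpa [ENNReal.coe_pow] using h2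

lemma nnHS_adjoint {ι κ : Type*} (T : H →L[ℂ] H) (b : HilbertBasis ι ℂ H)
    (b' : HilbertBasis κ ℂ H) : nnHS T b = nnHS (adjoint T) b' := by
  unfold nnHS
  calc ∑' i, (‖T (b i)‖₊ ^ 2 : ℝ≥0∞)
      = ∑' i, ∑' j, (‖⟪b' j, T (b i)⟫_ℂ‖₊ ^ 2 : ℝ≥0∞) :=
        tsum_congr fun i => parseval_enn b' _
    _ = ∑' j, ∑' i, (‖⟪b' j, T (b i)⟫_ℂ‖₊ ^ 2 : ℝ≥0∞) := ENNReal.tsum_comm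
    _ = ∑' j, ∑' i, (‖⟪b i, adjoint T (b' j)⟫_ℂ‖₊ ^ 2 : ℝ≥0∞) := by
        refine tsum_congr fun j => tsum_congr fun i => ?_
        congr 2
        rw [← adjoint_inner_left]
        simp only [nnnorm]
        congr 1
        exact norm_inner_symm _ _
    _ = ∑' j, (‖adjoint T (b' j)‖₊ ^ 2 : ℝ≥0∞) :=
        tsum_congr fun j => (parseval_enn b _).symm

lemma nnHS_basis_indep {ι κ : Type*} (T : H →L[ℂ] H) (b : HilbertBasis ι ℂ H)
    (b' : HilbertBasis κ ℂ H) : nnHS T b = nnHS T b' := by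
  rw [nnHS_adjoint T b b', nnHS_adjoint (adjoint T) b' b', adjoint_adjoint]

lemma summable_iff_nnHS {ι : Type*} (T : H →L[ℂ] H) (b : HilbertBasis ι ℂ H) :
    (Summable fun i => ‖T (b i)‖ ^ 2) ↔ nnHS T b ≠ ⊤ := by
  have e1 : (fun i => ‖T (b i)‖ ^ 2) = fun i => ((‖T (b i)‖₊ ^ 2 : ℝ≥0) : ℝ) := by
    ext i; push_cast; rfl
  rw [nnHS, e1, NNReal.summable_coe, ← ENNReal.tsum_coe_ne_top_iff_summable]
  simp [ENNReal.coe_pow]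


lemma IsHS.summable {κ : Type*} {T : H →L[ℂ] H} (h : IsHS T) (b : HilbertBasis κ ℂ H) :
    Summable fun i => ‖T (b i)‖ ^ 2 := by
  obtain ⟨κ', b', hb'⟩ := h
  rw [summable_iff_nnHS] at hb' ⊢
  rwa [nnHS_basis_indep T b b']

lemma IsHS.basis {T : H →L[ℂ] H} (h : IsHS T) : ∃ (ι : Type) (b : HilbertBasis ι ℂ H), True :=
  ⟨h.choose, h.choose_spec.choose, trivial⟩

lemma IsHS.adj {T : H →L[ℂ] H} (h : IsHS T) : IsHS (ContinuousLinearMap.adjoint T) := by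
  obtain ⟨ι, b, -⟩ := h.basis
  refine ⟨ι, b, ?_⟩
  rw [summable_iff_nnHS, ← nnHS_adjoint T b b, ← summable_iff_nnHS]
  exact h.summable b

lemma IsHS.add {S T : H →L[ℂ] H} (hS : IsHS S) (hT : IsHS T) : IsHS (S + T) := by
  obtain ⟨ι, b, -⟩ := hS.basis
  refine ⟨ι, b, ?_⟩
  have h1 := hS.summable b
  have h2 := hT.summable b
  refine Summable.of_nonneg_of_le (fun i => by positivity)
    (fun i => ?_) ((h1.add h2).mul_left 2)
  have hle : ‖(S + T) (b i)‖ ≤ ‖S (b i)‖ + ‖T (b i)‖ := norm_add_le _ _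
  calc ‖(S + T) (b i)‖ ^ 2 ≤ (‖S (b i)‖ + ‖T (b i)‖) ^ 2 :=
        pow_le_pow_left₀ (norm_nonneg _) hle 2
    _ ≤ 2 * (‖S (b i)‖ ^ 2 + ‖T (b i)‖ ^ 2) := by nlinarith [sq_nonneg (‖S (b i)‖ - ‖T (b i)‖)]

lemma IsHS.smul {T : H →L[ℂ] H} (c : ℂ) (h : IsHS T) : IsHS (c • T) := by
  obtain ⟨ι, b, -⟩ := h.basis
  refine ⟨ι, b, ?_⟩
  have h1 := h.summable b
  simp only [coe_smul', Pi.smul_apply, norm_smul, mul_pow]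
  exact h1.mul_left _

lemma IsHS.neg {T : H →L[ℂ] H} (h : IsHS T) : IsHS (-T) := by
  have := h.smul (-1)
  simpa using this

lemma IsHS.lmul {T : H →L[ℂ] H} (C : H →L[ℂ] H) (h : IsHS T) : IsHS (C * T) := by
  obtain ⟨ι, b, -⟩ := h.basis
  refine ⟨ι, b, ?_⟩
  refine Summable.of_nonneg_of_le (fun i => by positivity)
    (fun i => ?_) ((h.summable b).mul_left (‖C‖ ^ 2))
  calc ‖(C * T) (b i)‖ ^ 2 ≤ (‖C‖ * ‖T (b i)‖) ^ 2 :=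
        pow_le_pow_left₀ (norm_nonneg _) (le_opNorm C _) 2
    _ = ‖C‖ ^ 2 * ‖T (b i)‖ ^ 2 := by ring

lemma IsHS.rmul {T : H →L[ℂ] H} (C : H →L[ℂ] H) (h : IsHS T) : IsHS (T * C) := by
  have h2 : IsHS (ContinuousLinearMap.adjoint C * ContinuousLinearMap.adjoint T) :=
    IsHS.lmul _ h.adj
  have h3 := h2.adj
  rw [← star_eq_adjoint, ← star_eq_adjoint, ← star_eq_adjoint, star_mul, star_star, star_star] at h3
  exact h3

lemma IsHS.sub {S T : H →L[ℂ] H} (hS : IsHS S) (hT : IsHS T) : IsHS (S - T) := by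
  have := hS.add hT.neg
  simpa [sub_eq_add_neg] using this


lemma IsTC.smul {T : H →L[ℂ] H} (c : ℂ) (h : IsTC T) : IsTC (c • T) := by
  obtain ⟨A, B, hA, hB, rfl⟩ := h
  exact ⟨c • A, B, hA.smul c, hB, (smul_mul_assoc c A B).symm⟩

lemma IsTC.diag_summable {κ : Type*} (b : HilbertBasis κ ℂ H) {M : H →L[ℂ] H}
    (h : IsTC M) : Summable fun i => ‖⟪M (b i), b i⟫_ℂ‖ := by
  obtain ⟨A, B, hA, hB, rfl⟩ := h
  have h1 := hB.summable b
  have h2 := (hA.adj).summable b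
  refine Summable.of_nonneg_of_le (fun i => norm_nonneg _) (fun i => ?_)
    ((h1.add h2).mul_left (1/2 : ℝ))
  have key : ⟪(A * B) (b i), b i⟫_ℂ = ⟪B (b i), ContinuousLinearMap.adjoint A (b i)⟫_ℂ :=
    (ContinuousLinearMap.adjoint_inner_right A (B (b i)) (b i)).symm
  rw [key]
  calc ‖⟪B (b i), ContinuousLinearMap.adjoint A (b i)⟫_ℂ‖
      ≤ ‖B (b i)‖ * ‖ContinuousLinearMap.adjoint A (b i)‖ := norm_inner_le_norm _ _
    _ ≤ 1/2 * (‖B (b i)‖ ^ 2 + ‖ContinuousLinearMap.adjoint A (b i)‖ ^ 2) := by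
        nlinarith [sq_nonneg (‖B (b i)‖ - ‖ContinuousLinearMap.adjoint A (b i)‖)]

set_option synthInstance.maxHeartbeats 1000000 in
set_option maxHeartbeats 1000000 in
lemma pos_tc (P T : H →L[ℂ] H) (hP : IsSelfAdjoint P) (hT : 0 ≤ T)
    (h1 : IsTC (P * T * P)) (h2 : IsTC ((1 - P) * T * (1 - P))) : IsTC T := by
  have hSsa : IsSelfAdjoint (CFC.sqrt T) := (CFC.sqrt_nonneg (a := T)).isSelfAdjoint
  have hSS : CFC.sqrt T * CFC.sqrt T = T := CFC.sqrt_mul_sqrt_self T hT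
  set S := CFC.sqrt T with hSdef
  have key : ∀ Q : H →L[ℂ] H, IsSelfAdjoint Q → IsTC (Q * T * Q) → IsHS (S * Q) := by
    intro Q hQ hQT
    obtain ⟨A, B, hA, hB, heq⟩ := hQT
    obtain ⟨ι, b, -⟩ := hA.basis
    refine ⟨ι, b, ?_⟩
    have hsum := IsTC.diag_summable b (M := Q * T * Q) ⟨A, B, hA, hB, heq⟩
    refine Summable.of_nonneg_of_le (fun i => by positivity) (fun i => ?_) hsum
    have e1 : ‖(S * Q) (b i)‖ ^ 2 = RCLike.re ⟪(Q * T * Q) (b i), b i⟫_ℂ := by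
      rw [← inner_self_eq_norm_sq (𝕜 := ℂ) ((S * Q) (b i))]
      congr 1
      have : ⟪S (Q (b i)), S (Q (b i))⟫_ℂ = ⟪ContinuousLinearMap.adjoint S (S (Q (b i))), Q (b i)⟫_ℂ := by
        rw [ContinuousLinearMap.adjoint_inner_left]
      rw [show ((S * Q) (b i)) = S (Q (b i)) from rfl, this]
      rw [← star_eq_adjoint, hSsa.star_eq]
      have e2 : S (S (Q (b i))) = T (Q (b i)) := by
        rw [← ContinuousLinearMap.mul_apply, hSS]
      rw [e2, ← ContinuousLinearMap.adjoint_inner_left Q, ← star_eq_adjoint, hQ.star_eq]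
      rfl
    rw [e1]
    exact RCLike.re_le_norm _
  have hsp := key P hP h1
  have hsq := key (1 - P) ((IsSelfAdjoint.one (R := H →L[ℂ] H)).sub hP) h2
  have hS : IsHS S := by
    have := hsp.add hsq
    rwa [← mul_add, add_sub_cancel, mul_one] at this
  exact ⟨S, S, hS, hS, hSS.symm⟩

set_option synthInstance.maxHeartbeats 1000000 in
set_option maxHeartbeats 1000000 in
lemma pred_pos_tc (P ρ₁ : H →L[ℂ] H) (hP : IsSelfAdjoint P)
    (hpos : (Complex.I • ρ₁).IsPositive)
    (h3 : IsTC (P * ρ₁ * P)) (h4 : IsTC ((1 - P) * ρ₁ * (1 - P))) : IsTC ρ₁ := by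
  set T := Complex.I • ρ₁ with hTdef
  have hT : 0 ≤ T := (nonneg_iff_isPositive T).2 hpos
  have e1 : P * T * P = Complex.I • (P * ρ₁ * P) := by
    rw [hTdef, mul_smul_comm, smul_mul_assoc]
  have e2 : (1 - P) * T * (1 - P) = Complex.I • ((1 - P) * ρ₁ * (1 - P)) := by
    rw [hTdef, mul_smul_comm, smul_mul_assoc]
  have hTtc : IsTC T := pos_tc P T hP hT (e1 ▸ h3.smul Complex.I) (e2 ▸ h4.smul Complex.I)
  have := hTtc.smul (-Complex.I)
  rwa [hTdef, smul_smul, neg_mul, Complex.I_mul_I, neg_neg, one_smul] at this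

lemma isHS_of_finiteDimensional [FiniteDimensional ℂ H] (T : H →L[ℂ] H) : IsHS T := by
  let n := Module.finrank ℂ H
  exact ⟨Fin n, (stdOrthonormalBasis ℂ H).toHilbertBasis, Summable.of_finite⟩

lemma isTC_of_finiteDimensional [FiniteDimensional ℂ H] (T : H →L[ℂ] H) : IsTC T :=
  ⟨T, 1, isHS_of_finiteDimensional T, isHS_of_finiteDimensional 1, (mul_one T).symm⟩

/-- The isometry of `H` into itself determined by sending a Hilbert basis to an
orthonormal family. -/
def famIso {ι : Type*} (b : HilbertBasis ι ℂ H) {f : ι → H} (hf : Orthonormal ℂ f) :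
    H →L[ℂ] H :=
  (hf.orthogonalFamily.linearIsometry.comp b.repr.toLinearIsometry).toContinuousLinearMap

lemma famIso_inner {ι : Type*} (b : HilbertBasis ι ℂ H) {f : ι → H} (hf : Orthonormal ℂ f)
    (x y : H) : ⟪famIso b hf x, famIso b hf y⟫_ℂ = ⟪x, y⟫_ℂ :=
  LinearIsometry.inner_map_map _ x y

lemma famIso_hasSum {ι : Type*} (b : HilbertBasis ι ℂ H) {f : ι → H} (hf : Orthonormal ℂ f)
    (x : H) : HasSum (fun i => b.repr x i • f i) (famIso b hf x) := by
  simpa [famIso, LinearIsometry.toSpanSingleton_apply] using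
    hf.orthogonalFamily.hasSum_linearIsometry (b.repr x)

lemma famIso_inner_zero {ι : Type*} (b : HilbertBasis ι ℂ H) {f : ι → H}
    (hf : Orthonormal ℂ f) (z x : H) (hz : ∀ i, ⟪z, f i⟫_ℂ = 0) :
    ⟪z, famIso b hf x⟫_ℂ = 0 := by
  have h := (famIso_hasSum b hf x).mapL (innerSL ℂ z)
  have h2 : ∀ i, innerSL ℂ z (b.repr x i • f i) = 0 := by
    intro i
    simp [inner_smul_right, hz i]
  rw [show (fun i => innerSL ℂ z (b.repr x i • f i)) = fun _ => (0 : ℂ) from funext h2] at h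
  exact (hasSum_zero.unique h).symm

lemma exists_isometry_pair (hfin : ¬ FiniteDimensional ℂ H) :
    ∃ u w : H →L[ℂ] H,
      ContinuousLinearMap.adjoint u * u = 1 ∧ ContinuousLinearMap.adjoint w * w = 1 ∧
      ContinuousLinearMap.adjoint u * w = 0 ∧ ContinuousLinearMap.adjoint w * u = 0 := by
  obtain ⟨s, b, hb⟩ := exists_hilbertBasis ℂ H
  have hinf : Infinite ↥s := by
    rw [Set.infinite_coe_iff]
    intro hfin'
    apply hfin
    have hclosed : IsClosed ((Submodule.span ℂ s : Submodule ℂ H) : Set H) := by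
      haveI : FiniteDimensional ℂ (Submodule.span ℂ s : Submodule ℂ H) :=
        FiniteDimensional.span_of_finite ℂ hfin'
      exact Submodule.closed_of_finiteDimensional _
    have htop : (Submodule.span ℂ (Set.range ⇑b)).topologicalClosure = ⊤ :=
      b.dense_span
    rw [hb, Subtype.range_coe] at htop
    rw [hclosed.submodule_topologicalClosure_eq] at htop
    have : FiniteDimensional ℂ (⊤ : Submodule ℂ H) := by
      rw [← htop]
      exact FiniteDimensional.span_of_finite ℂ hfin'
    exact Module.Finite.equiv (Submodule.topEquiv (R := ℂ) (M := H))
  have hcard : Nonempty ((↥s ⊕ ↥s) ≃ ↥s) := by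
    apply Cardinal.eq.1
    simp [Cardinal.mk_sum, Cardinal.add_mk_eq_max]
  obtain ⟨e⟩ := hcard
  have hf : Orthonormal ℂ (fun i : ↥s => b (e (Sum.inl i))) :=
    b.orthonormal.comp _ fun i j hij => by
      simpa using e.injective hij
  have hg : Orthonormal ℂ (fun i : ↥s => b (e (Sum.inr i))) :=
    b.orthonormal.comp _ fun i j hij => by
      simpa using e.injective hij
  have hcross : ∀ i j : ↥s, ⟪b (e (Sum.inl i)), b (e (Sum.inr j))⟫_ℂ = 0 := fun i j =>
    b.orthonormal.2 (fun h => by simpa using e.injective h)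
  refine ⟨famIso b hf, famIso b hg, ?_, ?_, ?_, ?_⟩ <;>
    refine ContinuousLinearMap.ext fun x => ext_inner_right ℂ fun y => ?_ <;>
    rw [ContinuousLinearMap.mul_apply, ContinuousLinearMap.adjoint_inner_left]
  · rw [famIso_inner]; rfl
  · rw [famIso_inner]; rfl
  · rw [show ⟪famIso b hg x, famIso b hf y⟫_ℂ = 0 from
      famIso_inner_zero b hf _ y fun i => ?_]
    · simp
    · rw [← inner_conj_symm]
      rw [famIso_inner_zero b hg _ x fun j => hcross i j]
      simp
  · rw [show ⟪famIso b hf x, famIso b hg y⟫_ℂ = 0 from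
      famIso_inner_zero b hg _ y fun j => ?_]
    · simp
    · rw [← inner_conj_symm]
      rw [famIso_inner_zero b hf _ x fun i => by
        rw [← inner_conj_symm, hcross i j]; simp]
      simp

lemma IsTC.add {X Y : H →L[ℂ] H} (h1 : IsTC X) (h2 : IsTC Y) : IsTC (X + Y) := by
  by_cases hfin : FiniteDimensional ℂ H
  · exact isTC_of_finiteDimensional _
  obtain ⟨u, w, huu, hww, huw, hwu⟩ := exists_isometry_pair hfin
  obtain ⟨A₁, B₁, hA₁, hB₁, rfl⟩ := h1
  obtain ⟨A₂, B₂, hA₂, hB₂, rfl⟩ := h2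
  set U := ContinuousLinearMap.adjoint u
  set W := ContinuousLinearMap.adjoint w
  refine ⟨A₁ * U + A₂ * W, u * B₁ + w * B₂,
    (hA₁.rmul U).add (hA₂.rmul W), (hB₁.lmul u).add (hB₂.lmul w), ?_⟩
  have expand : (A₁ * U + A₂ * W) * (u * B₁ + w * B₂) =
      A₁ * (U * u) * B₁ + A₁ * (U * w) * B₂ + A₂ * (W * u) * B₁ + A₂ * (W * w) * B₂ := by
    noncomm_ring
  rw [expand, huu, hww, huw, hwu]
  simp

lemma IsTC.sub {X Y : H →L[ℂ] H} (h1 : IsTC X) (h2 : IsTC Y) : IsTC (X - Y) := by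
  have h2' : IsTC (-Y) := by
    have := h2.smul (-1)
    simpa using this
  have := h1.add h2'
  simpa [sub_eq_add_neg] using this

end Aux

/-- If `ρ ∈ (u_res)_*` is not trace class, then it is not a difference of two elements of
`(u_res)_*` with positive `i⋅(⋅)`: the predual is not spanned by its positive cone. -/
theorem stmt13 {H : Type*} [NormedAddCommGroup H] [InnerProductSpace ℂ H] [CompleteSpace H]
    (P : H →L[ℂ] H) (hP : IsSelfAdjoint P) (hP2 : P * P = P)
    (ρ : H →L[ℂ] H)
    (hρ1 : star ρ = -ρ) (hρ2 : IsHS (dOp P * ρ - ρ * dOp P))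
    (hρ3 : IsTC (P * ρ * P)) (hρ4 : IsTC ((1 - P) * ρ * (1 - P)))
    (hnot : ¬ IsTC ρ) :
    ¬ ∃ ρ₁ ρ₂ : H →L[ℂ] H,
        (star ρ₁ = -ρ₁ ∧ IsHS (dOp P * ρ₁ - ρ₁ * dOp P) ∧
          IsTC (P * ρ₁ * P) ∧ IsTC ((1 - P) * ρ₁ * (1 - P))) ∧
        (star ρ₂ = -ρ₂ ∧ IsHS (dOp P * ρ₂ - ρ₂ * dOp P) ∧
          IsTC (P * ρ₂ * P) ∧ IsTC ((1 - P) * ρ₂ * (1 - P))) ∧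
        (Complex.I • ρ₁).IsPositive ∧ (Complex.I • ρ₂).IsPositive ∧
        ρ = ρ₁ - ρ₂ := by
  rintro ⟨ρ₁, ρ₂, ⟨-, -, h13, h14⟩, ⟨-, -, h23, h24⟩, hpos1, hpos2, rfl⟩
  exact hnot ((pred_pos_tc P ρ₁ hP hpos1 h13 h14).sub (pred_pos_tc P ρ₂ hP hpos2 h23 h24))
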